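/- Let V be a finite-dimensional real vector space with a (possibly degenerate) skew-symmetric bilinear form σ, and suppose V = E ⊕ F where both E and F are isotropic subspaces (σ vanishes identically on E×E and on F×F) and F intersects the kernel of σ trivially. Let W be a linear subspace of End(V) such that every A ∈ W annihilates E and maps F into E, and such that W contains no nonzero element of rank ≤ 1. Let φ : V → W be a linear map satisfying φ(a)b = φ(b)a for all a,b ∈ V (i.e., φ lies in the standard first prolongation W^{(1)}). If φ has rank ≤ 1 as a linear map from V to the vector space W, i.e., there exist a linear functional α on V and A₀ ∈ W with φ(u) = α(u)·A₀ for all u ∈ V, then φ = 0. (Thus the standard first prolongation of W again contains no nonzero elements of rank 1, so the construction can be iterated and all higher modified prolongations of W coincide with the standard ones.) -/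
import Mathlib

/-- With `V = E ⊕ F`, `E, F` isotropic for `σ`, `F` meeting the kernel of
`σ` trivially, and `W ⊆ End(V)` annihilating `E`, mapping `F` into `E`, with no nonzero
elements of rank ≤ 1: if `φ : V → W` lies in the standard first prolongation
(`φ(a)b = φ(b)a`) and has rank ≤ 1 as a map to `W` (`φ(u) = α(u) • A₀`), then `φ = 0`. -/
theorem stmt_6 (V : Type*) [AddCommGroup V] [Module ℝ V] [FiniteDimensional ℝ V]
    (σ : V →ₗ[ℝ] V →ₗ[ℝ] ℝ) (hskew : ∀ x y : V, σ x y = - σ y x)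
    (E F : Submodule ℝ V) (hcompl : IsCompl E F)
    (hE : ∀ x ∈ E, ∀ y ∈ E, σ x y = 0) (hF : ∀ x ∈ F, ∀ y ∈ F, σ x y = 0)
    (hker : ∀ f ∈ F, f ≠ 0 → ∃ u : V, σ f u ≠ 0)
    (W : Submodule ℝ (V →ₗ[ℝ] V))
    (hWE : ∀ A ∈ W, ∀ e ∈ E, A e = 0)
    (hWF : ∀ A ∈ W, ∀ f ∈ F, A f ∈ E)
    (hrank : ∀ A ∈ W, Module.finrank ℝ (LinearMap.range A) ≤ 1 → A = 0)
    (φ : V →ₗ[ℝ] (V →ₗ[ℝ] V)) (hφW : ∀ z : V, φ z ∈ W)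
    (hsym : ∀ a b : V, φ a b = φ b a)
    (α : V →ₗ[ℝ] ℝ) (A₀ : V →ₗ[ℝ] V) (hA₀ : A₀ ∈ W)
    (hφrk : ∀ u : V, φ u = α u • A₀) :
    φ = 0 := by
  by_cases hα : α = 0
  · ext u v
    simp [hφrk, hα]
  · obtain ⟨a, ha⟩ : ∃ a, α a ≠ 0 := by
      by_contra h
      push_neg at h
      exact hα (by ext u; simp [h u])
    set c := (α a)⁻¹ • a with hc
    have hαc : α c = 1 := by simp [hc, inv_mul_cancel₀ ha]
    have key : ∀ b : V, A₀ b = α b • A₀ c := by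
      intro b
      have := hsym b c
      rw [hφrk b, hφrk c, hαc] at this
      simpa using this.symm
    have hle : LinearMap.range A₀ ≤ Submodule.span ℝ {A₀ c} := by
      rintro x ⟨b, rfl⟩
      rw [key b]
      exact Submodule.smul_mem _ _ (Submodule.mem_span_singleton_self _)
    have h2 : Module.finrank ℝ (Submodule.span ℝ {A₀ c}) ≤ 1 := by
      rcases eq_or_ne (A₀ c) 0 with h | h
      · rw [h, Submodule.span_zero_singleton]
        simp
      · rw [finrank_span_singleton h]
    have h1 : Module.finrank ℝ (LinearMap.range A₀) ≤ 1 :=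
      le_trans (Submodule.finrank_mono hle) h2
    have hA0 : A₀ = 0 := hrank A₀ hA₀ h1
    ext u v
    simp [hφrk, hA0]
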